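/- Let K be a probabilistic theory, let M, N be observables on K, let S, T be trivial observables on K, and let λ ∈ [0,1]. Then the observables λM + (1−λ)T and (1−λ)N + λS are compatible. -/

import Mathlib

open MeasureTheory

variable {V : Type*} [NormedAddCommGroup V] [NormedSpace ℝ V] [CompleteSpace V]

/-- A probabilistic theory: a σ-convex subset `K` of a real Banach space `V`.
Whenever `λᵢ ∈ [0,1]` with `∑ λᵢ = 1` and `vᵢ ∈ K`, the series `∑ λᵢ vᵢ`
converges in norm to an element of `K`. -/
def SigmaConvex (K : Set V) : Prop :=
  ∀ (lam : ℕ → ℝ) (v : ℕ → V), (∀ i, 0 ≤ lam i) → (∀ i, v i ∈ K) →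
    HasSum lam 1 → ∃ s ∈ K, HasSum (fun i => lam i • v i) s

/-- An (`α`-valued) observable on `K`: a σ-affine map from `K` to the Borel
probability measures on `α`.  Taking `α = ℝ` gives ordinary (1-dimensional)
observables, and `α = Fin n → ℝ` gives `n`-dimensional observables. -/
structure Observable (K : Set V) (α : Type*) [MeasurableSpace α] where
  toFun : K → Measure α
  prob : ∀ s, IsProbabilityMeasure (toFun s)
  sigmaAffine : ∀ (lam : ℕ → ℝ) (v : ℕ → K) (s : K), (∀ i, 0 ≤ lam i) →
    HasSum lam 1 → HasSum (fun i => lam i • (v i : V)) (s : V) →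
    ∀ A : Set α, MeasurableSet A →
      toFun s A = ∑' i, ENNReal.ofReal (lam i) * toFun (v i) A

/-- Observables `M₁, …, Mₙ` on `K` are compatible if they have a joint
observable: an `n`-dimensional observable whose `i`-th marginal is `Mᵢ`
(where the `i`-th marginal of `J` is `s ↦ (A ↦ J s {x | x i ∈ A})`,
i.e. evaluation on the cylinder set `ℝ × ⋯ × A × ⋯ × ℝ`). -/
def Compatible {K : Set V} {n : ℕ} (Ms : Fin n → Observable K ℝ) : Prop :=
  ∃ J : Observable K (Fin n → ℝ), ∀ (s : K) (A : Set ℝ), MeasurableSet A →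
    ∀ i, J.toFun s {x | x i ∈ A} = (Ms i).toFun s A

/-- A trivial observable: one that is constantly equal to a fixed Borel
probability measure `p` on `ℝ`. -/
def IsTrivial {K : Set V} (T : Observable K ℝ) : Prop :=
  ∃ p : Measure ℝ, ∀ s, T.toFun s = p

open scoped ENNReal

/-- Auxiliary: scalar multiplication commutes with product measures (left). -/
lemma aux_smul_prod {α β : Type*} [MeasurableSpace α] [MeasurableSpace β]
    (c : ℝ≥0∞) (μ : Measure α) (ν : Measure β) [SFinite μ] [SFinite ν] :
    (c • μ).prod ν = c • μ.prod ν := by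
  ext B hB
  rw [Measure.prod_apply hB, lintegral_smul_measure, Measure.smul_apply,
    Measure.prod_apply hB, smul_eq_mul]

/-- Auxiliary: scalar multiplication commutes with product measures (right). -/
lemma aux_prod_smul {α β : Type*} [MeasurableSpace α] [MeasurableSpace β]
    (c : ℝ≥0∞) (hc : c ≠ ⊤) (μ : Measure α) (ν : Measure β) [SFinite μ] [SFinite ν] :
    μ.prod (c • ν) = c • μ.prod ν := by
  ext B hB
  rw [Measure.prod_apply hB, Measure.smul_apply, Measure.prod_apply hB, smul_eq_mul,
    ← lintegral_const_mul' _ _ hc]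
  simp [Measure.smul_apply]

/-- For observables `M, N`, trivial observables `S, T`, and
`λ ∈ [0,1]`, the noisy versions `λM + (1-λ)T` and `(1-λ)N + λS` are
compatible. -/
theorem noisy_versions_compatible {K : Set V} (hK : SigmaConvex K)
    (M N S T : Observable K ℝ) (hS : IsTrivial S) (hT : IsTrivial T)
    (lam : ℝ) (h0 : 0 ≤ lam) (h1 : lam ≤ 1)
    (P Q : Observable K ℝ)
    (hP : ∀ (s : K) (A : Set ℝ), MeasurableSet A →
      P.toFun s A = ENNReal.ofReal lam * M.toFun s A
        + ENNReal.ofReal (1 - lam) * T.toFun s A)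
    (hQ : ∀ (s : K) (A : Set ℝ), MeasurableSet A →
      Q.toFun s A = ENNReal.ofReal (1 - lam) * N.toFun s A
        + ENNReal.ofReal lam * S.toFun s A) :
    Compatible ![P, Q] := by
  classical
  obtain ⟨pS, hpS⟩ := hS
  obtain ⟨pT, hpT⟩ := hT
  set a : ℝ≥0∞ := ENNReal.ofReal lam with ha
  set b : ℝ≥0∞ := ENNReal.ofReal (1 - lam) with hb
  have hab : a + b = 1 := by
    rw [ha, hb, ← ENNReal.ofReal_add h0 (by linarith)]
    norm_num
  set e : (Fin 2 → ℝ) ≃ᵐ ℝ × ℝ := MeasurableEquiv.finTwoArrow with he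
  set ν : K → Measure (ℝ × ℝ) := fun s =>
    a • (M.toFun s).prod pS + b • pT.prod (N.toFun s) with hν
  refine ⟨⟨fun s => (ν s).map e.symm, ?_, ?_⟩, ?_⟩
  · -- probability
    intro s
    haveI : IsProbabilityMeasure pS := hpS s ▸ S.prob s
    haveI : IsProbabilityMeasure pT := hpT s ▸ T.prob s
    haveI := M.prob s
    haveI := N.prob s
    constructor
    rw [MeasurableEquiv.map_apply]
    simp only [Set.preimage_univ, hν, Measure.add_apply, Measure.smul_apply,
      smul_eq_mul, measure_univ, mul_one]
    exact hab
  · -- σ-affinity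
    intro lam' v s hnn hsum hvsum A hA
    haveI : IsProbabilityMeasure pS := hpS s ▸ S.prob s
    haveI : IsProbabilityMeasure pT := hpT s ▸ T.prob s
    haveI : ∀ i, SFinite (M.toFun (v i)) := fun i => by
      haveI := M.prob (v i); infer_instance
    haveI : ∀ i, SFinite (N.toFun (v i)) := fun i => by
      haveI := N.prob (v i); infer_instance
    set c : ℕ → ℝ≥0∞ := fun i => ENNReal.ofReal (lam' i) with hc
    have hcne : ∀ i, c i ≠ ⊤ := fun i => ENNReal.ofReal_ne_top
    have hM : M.toFun s = Measure.sum (fun i => c i • M.toFun (v i)) := by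
      ext B hB
      rw [M.sigmaAffine lam' v s hnn hsum hvsum B hB, Measure.sum_apply _ hB]
      simp [Measure.smul_apply]
      rfl
    have hN : N.toFun s = Measure.sum (fun i => c i • N.toFun (v i)) := by
      ext B hB
      rw [N.sigmaAffine lam' v s hnn hsum hvsum B hB, Measure.sum_apply _ hB]
      simp [Measure.smul_apply]
      rfl
    have hB : MeasurableSet (e.symm ⁻¹' A) := e.symm.measurable hA
    simp only [MeasurableEquiv.map_apply]
    set B := e.symm ⁻¹' A with hBdef
    have h1' : ((M.toFun s).prod pS) B = ∑' i, c i * ((M.toFun (v i)).prod pS) B := by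
      rw [hM, Measure.prod_sum_left, Measure.sum_apply _ hB]
      exact tsum_congr fun i => by rw [aux_smul_prod, Measure.smul_apply, smul_eq_mul]
    have h2' : (pT.prod (N.toFun s)) B = ∑' i, c i * (pT.prod (N.toFun (v i))) B := by
      rw [hN, Measure.prod_sum_right, Measure.sum_apply _ hB]
      exact tsum_congr fun i => by
        rw [aux_prod_smul _ (hcne i), Measure.smul_apply, smul_eq_mul]
    simp only [hν, Measure.add_apply, Measure.smul_apply, smul_eq_mul]
    rw [h1', h2', ← ENNReal.tsum_mul_left, ← ENNReal.tsum_mul_left, ← ENNReal.tsum_add]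
    exact tsum_congr fun i => by ring
  · -- marginals
    intro s A hA i
    haveI : IsProbabilityMeasure pS := hpS s ▸ S.prob s
    haveI : IsProbabilityMeasure pT := hpT s ▸ T.prob s
    haveI := M.prob s
    haveI := N.prob s
    fin_cases i
    · show ((ν s).map e.symm) {x : Fin 2 → ℝ | x 0 ∈ A} = P.toFun s A
      have hpre : e.symm ⁻¹' {x : Fin 2 → ℝ | x 0 ∈ A} = A ×ˢ Set.univ := by
        ext p
        simp [he, Set.mem_prod]
      rw [MeasurableEquiv.map_apply, hpre]
      simp only [hν, Measure.add_apply, Measure.smul_apply, smul_eq_mul,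
        Measure.prod_prod, measure_univ, mul_one]
      rw [hP s A hA, hpT s]
    · show ((ν s).map e.symm) {x : Fin 2 → ℝ | x 1 ∈ A} = Q.toFun s A
      have hpre : e.symm ⁻¹' {x : Fin 2 → ℝ | x 1 ∈ A} = Set.univ ×ˢ A := by
        ext p
        simp [he, Set.mem_prod]
      rw [MeasurableEquiv.map_apply, hpre]
      simp only [hν, Measure.add_apply, Measure.smul_apply, smul_eq_mul,
        Measure.prod_prod, measure_univ, one_mul]
      rw [hQ s A hA, hpS s, add_comm]
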